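/- For every integer n ≥ 1, the number of ∘-decorated Dyck paths of size n equals (2^{n−1}/(n+1))·binom(2n, n); equivalently, (n+1) times the cardinality of the set of ∘-decorated Dyck paths of size n equals 2^{n−1}·binom(2n, n). -/

import Mathlib

open Finset

namespace DeltaCat

/-- `i`-th entry (0-indexed) of an area sequence, defaulting to `0`. -/
def ent (l : List ℕ) (i : ℕ) : ℕ := l.getD i 0

/-- `l` is the area sequence of a Dyck path (of size `l.length ≥ 1`): it is nonempty,
starts with `0`, and consecutive entries increase by at most one. -/
def IsDyck (l : List ℕ) : Prop :=
  l ≠ [] ∧ ent l 0 = 0 ∧ ∀ i < l.length, i + 1 < l.length → ent l (i + 1) ≤ ent l i + 1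

instance (l : List ℕ) : Decidable (IsDyck l) := by unfold IsDyck; infer_instance

/-- the area of a Dyck path -/
def area (l : List ℕ) : ℕ := l.sum

/-- the diagonal inversions of a Dyck path: pairs `(i,j)`, `i < j`, with
`a_i = a_j` or `a_i = a_j + 1` (0-indexed rows). -/
def dinvPairs (l : List ℕ) : Finset (ℕ × ℕ) :=
  (Finset.range l.length ×ˢ Finset.range l.length).filter
    (fun p => p.1 < p.2 ∧ (ent l p.1 = ent l p.2 ∨ ent l p.1 = ent l p.2 + 1))

/-- the number of diagonal inversions -/
def dinv (l : List ℕ) : ℕ := (dinvPairs l).card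

/-- `b'(k) = #{j > k : a_j = a_k} + #{j < k : a_j = a_k + 1}` (0-indexed rows). -/
def bval (l : List ℕ) (k : ℕ) : ℕ :=
  ((Finset.range l.length).filter (fun j => k < j ∧ ent l j = ent l k)).card +
  ((Finset.range l.length).filter (fun j => j < k ∧ ent l j = ent l k + 1)).card

/-- row `i` (0-indexed) is a double rise -/
def IsRise (l : List ℕ) (i : ℕ) : Prop := i + 1 < l.length ∧ ent l (i + 1) = ent l i + 1

instance (l : List ℕ) (i : ℕ) : Decidable (IsRise l i) := by unfold IsRise; infer_instance

/-- row `i` (0-indexed) is a peak -/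
def IsPeak (l : List ℕ) (i : ℕ) : Prop := i < l.length ∧ ¬ IsRise l i

instance (l : List ℕ) (i : ℕ) : Decidable (IsPeak l i) := by unfold IsPeak; infer_instance

/-- `Rise_∘(D,S)`: the decorated rows which are double rises -/
def riseSet (l : List ℕ) (S : Finset ℕ) : Finset ℕ := S.filter (fun i => IsRise l i)

/-- `Peak_∘(D,S)`: the decorated rows which are peaks -/
def peakSet (l : List ℕ) (S : Finset ℕ) : Finset ℕ := S.filter (fun i => IsPeak l i)

/-- `area_∘(D,S)` -/
def areaC (l : List ℕ) (S : Finset ℕ) : ℕ := area l - ∑ i ∈ riseSet l S, ent l (i + 1)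

/-- `dinv_∘(D,S)` -/
def dinvC (l : List ℕ) (S : Finset ℕ) : ℕ := dinv l - ∑ i ∈ peakSet l S, bval l i

/-- the largest row index (0-indexed) attaining the maximal area value -/
def lastMaxRow (l : List ℕ) : ℕ :=
  ((Finset.range l.length).filter
    (fun i => ∀ j ∈ Finset.range l.length, ent l j ≤ ent l i)).sup id

/-- `S` is a valid set of ∘-decorations on the rows of `l` : a set of rows not containing
the largest index attaining the maximal area value. -/
def ValidDec (l : List ℕ) (S : Finset ℕ) : Prop :=
  (∀ i ∈ S, i < l.length) ∧ lastMaxRow l ∉ S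

instance (l : List ℕ) (S : Finset ℕ) : Decidable (ValidDec l S) := by
  unfold ValidDec; infer_instance

/-- the (0-indexed) rows where the path touches the diagonal, i.e. the starts of segments -/
def segStarts (l : List ℕ) : List ℕ :=
  (List.range l.length).filter (fun i => ent l i == 0)

/-- the touch composition of a Dyck path: the list of lengths of the maximal segments -/
def touchComp (l : List ℕ) : List ℕ :=
  List.zipWith (fun cur next => next - cur) (segStarts l) ((segStarts l).drop 1 ++ [l.length])

/-- the rise-touch composition `α^Rise(D,S)`: the touch composition with the number of
decorated double rises in each segment subtracted from the corresponding part. -/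
def riseTouch (l : List ℕ) (S : Finset ℕ) : List ℕ :=
  List.zipWith
    (fun cur next => (next - cur) - ((riseSet l S).filter (fun i => cur ≤ i ∧ i < next)).card)
    (segStarts l) ((segStarts l).drop 1 ++ [l.length])

/-- all lists of length `n` with entries at most `n`; this contains every Dyck path
area sequence of size `n`. -/
def allSeqs (n : ℕ) : Finset (List ℕ) :=
  (Finset.univ : Finset (Fin n → Fin (n + 1))).image fun v => (List.ofFn v).map Fin.val

/-- the Finset of all Dyck paths of size `n` (encoded by their area sequences) -/
def dyckPaths (n : ℕ) : Finset (List ℕ) := (allSeqs n).filter IsDyck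

/-- the Finset of all ∘-decorated Dyck paths of size `n` -/
def decPaths (n : ℕ) : Finset (List ℕ × Finset ℕ) :=
  ((allSeqs n) ×ˢ (Finset.range n).powerset).filter fun p => IsDyck p.1 ∧ ValidDec p.1 p.2

/-- `Cat^Rise_{α,k,ℓ}(q,t)`, the generating function of ∘-decorated Dyck paths of size
`|α| + ℓ` with `k` decorated peaks, `ℓ` decorated double rises and rise-touch composition
`α`, by the statistics `dinv_∘` and `area_∘`; it is `0` when `k < 0` or `ℓ < 0`. -/
def CatRise {R : Type*} [CommRing R] (q t : R) (α : List ℕ) (k ℓ : ℤ) : R :=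
  if 0 ≤ k ∧ 0 ≤ ℓ then
    ∑ p ∈ (decPaths (α.sum + ℓ.toNat)).filter
        (fun p => (peakSet p.1 p.2).card = k.toNat ∧ (riseSet p.1 p.2).card = ℓ.toNat ∧
          riseTouch p.1 p.2 = α),
      q ^ dinvC p.1 p.2 * t ^ areaC p.1 p.2
  else 0

end DeltaCat

open DeltaCat

namespace DeltaCatAux

open DeltaCat List

/-- The step relation for area sequences. -/
def Step (a b : ℕ) : Prop := b ≤ a + 1

lemma ent_eq_get (l : List ℕ) (i : ℕ) (h : i < l.length) : ent l i = l.get ⟨i, h⟩ := by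
  simp [ent, List.getD_eq_getElem?_getD, List.getElem?_eq_getElem h]

lemma isDyck_iff (l : List ℕ) :
    IsDyck l ↔ l ≠ [] ∧ ent l 0 = 0 ∧ l.Chain' Step := by
  unfold IsDyck
  refine and_congr_right fun _ => and_congr_right fun _ => ?_
  unfold List.Chain'
  rw [List.isChain_iff_getElem]
  constructor
  · intro h i hi
    have h1 : i + 1 < l.length := by omega
    have := h i (by omega) h1
    rwa [ent_eq_get l i (by omega), ent_eq_get l (i+1) h1] at this
  · intro h i _ h1
    have := h i (by omega)
    rw [ent_eq_get l i (by omega), ent_eq_get l (i+1) h1]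
    exact this

lemma isDyck_cons_iff (t : List ℕ) :
    IsDyck (0 :: t) ↔ (0 :: t).Chain' Step := by
  rw [isDyck_iff]
  simp [ent]

lemma ent_le_of_isDyck {l : List ℕ} (hl : IsDyck l) : ∀ i, ent l i ≤ i := by
  intro i
  induction i with
  | zero => exact le_of_eq hl.2.1
  | succ n ih =>
      by_cases h : n + 1 < l.length
      · have := hl.2.2 n (by omega) h
        omega
      · simp [ent, List.getD_eq_getElem?_getD, List.getElem?_eq_none (by omega : l.length ≤ n+1)]

lemma mem_allSeqs_iff {l : List ℕ} {n : ℕ} :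
    l ∈ allSeqs n ↔ l.length = n ∧ ∀ x ∈ l, x ≤ n := by
  constructor
  · intro h
    simp only [allSeqs, Finset.mem_image] at h
    obtain ⟨v, -, rfl⟩ := h
    constructor
    · simp
    · intro x hx
      simp only [List.mem_map, List.mem_ofFn] at hx
      obtain ⟨y, ⟨i, rfl⟩, rfl⟩ := hx
      exact Nat.lt_succ_iff.mp (v i).isLt
  · rintro ⟨hlen, hmem⟩
    simp only [allSeqs, Finset.mem_image]
    refine ⟨fun i => ⟨l[(i : ℕ)]'(by omega), ?_⟩, Finset.mem_univ _, ?_⟩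
    · exact Nat.lt_succ_iff.mpr (hmem _ (List.getElem_mem _))
    · apply List.ext_getElem
      · simp [hlen]
      · intro i h1 h2
        simp

lemma mem_dyckPaths_iff {l : List ℕ} {n : ℕ} :
    l ∈ dyckPaths n ↔ IsDyck l ∧ l.length = n := by
  rw [dyckPaths, Finset.mem_filter, mem_allSeqs_iff]
  constructor
  · tauto
  · rintro ⟨hd, hlen⟩
    refine ⟨⟨hlen, fun x hx => ?_⟩, hd⟩
    obtain ⟨i, hi, rfl⟩ := List.mem_iff_get.mp hx
    rw [← ent_eq_get]
    calc ent l i ≤ i := ent_le_of_isDyck hd i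
    _ ≤ n := by have := i.isLt; omega

/-- the auxiliary family: `dyckPaths m` for `m ≥ 1` plus the empty path for `m = 0`. -/
def dyck' (m : ℕ) : Finset (List ℕ) := if m = 0 then {[]} else dyckPaths m

lemma mem_dyck'_iff {l : List ℕ} {m : ℕ} :
    l ∈ dyck' m ↔ l.length = m ∧ (l = [] ∨ IsDyck l) := by
  unfold dyck'
  split_ifs with h
  · subst h
    simp only [Finset.mem_singleton]
    constructor
    · rintro rfl; simp
    · rintro ⟨hl, h | h⟩
      · exact h
      · exact List.length_eq_zero_iff.mp hl

  · rw [mem_dyckPaths_iff]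
    constructor
    · tauto
    · rintro ⟨hl, hd | hd⟩
      · subst hd; simp at hl; omega
      · exact ⟨hd, hl⟩

lemma chain'_of_dyck' {l : List ℕ} {m : ℕ} (h : l ∈ dyck' m) : l.Chain' Step := by
  rcases (mem_dyck'_iff.mp h).2 with rfl | hd
  · exact List.IsChain.nil
  · exact ((isDyck_iff l).mp hd).2.2

lemma head?_of_dyck' {l : List ℕ} {m : ℕ} (h : l ∈ dyck' m) :
    l = [] ∨ l.head? = some 0 := by
  rcases (mem_dyck'_iff.mp h).2 with rfl | hd
  · left; rfl
  · right
    obtain ⟨a, t, rfl⟩ := List.exists_cons_of_ne_nil hd.1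
    have := hd.2.1
    simp [ent] at this
    simp [this]

/-- the gluing map of the first-return decomposition -/
def glue (u v : List ℕ) : List ℕ := 0 :: (u.map (· + 1) ++ v)

lemma isDyck_glue {u v : List ℕ} {a b : ℕ} (hu : u ∈ dyck' a) (hv : v ∈ dyck' b) :
    IsDyck (glue u v) := by
  rw [glue, isDyck_cons_iff]
  unfold List.Chain'
  rw [List.isChain_cons]
  constructor
  · intro y hy
    rcases u with _ | ⟨x, u⟩
    · simp only [List.map_nil, List.nil_append] at hy
      rcases head?_of_dyck' hv with rfl | h0
      · simp at hy
      · rw [h0] at hy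
        simp at hy
        simp only [Step]
        omega
    · simp only [List.map_cons, List.cons_append, List.head?_cons, Option.mem_def,
        Option.some.injEq] at hy
      have hx : ent (x :: u) 0 = 0 := ((mem_dyck'_iff.mp hu).2.resolve_left (by simp)).2.1
      simp [ent] at hx
      subst hx
      simp [Step, ← hy]
  · rw [List.isChain_append]
    refine ⟨?_, chain'_of_dyck' hv, ?_⟩
    · rw [List.isChain_map]
      exact (show List.IsChain Step _ from chain'_of_dyck' hu).imp (fun a b hab => by simp only [Step] at *; omega)
    · intro x _ y hy
      rcases head?_of_dyck' hv with rfl | h0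
      · simp at hy
      · rw [h0] at hy
        simp at hy
        simp only [Step]
        omega

lemma takeWhile_dropWhile_append {p : ℕ → Bool} {u v : List ℕ}
    (hu : ∀ x ∈ u, p x = true)
    (hv : ∀ y ∈ v.head?, p y = false) :
    (u ++ v).takeWhile p = u ∧ (u ++ v).dropWhile p = v := by
  induction u with
  | nil =>
      rcases v with _ | ⟨x, v⟩
      · simp
      · have hx : p x = false := hv x rfl
        simp [List.takeWhile_cons, List.dropWhile_cons, hx]
  | cons x u ih =>
      have hx : p x = true := hu x (by simp)
      have := ih (fun y hy => hu y (by simp [hy]))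
      simp [List.takeWhile_cons, List.dropWhile_cons, hx, this.1, this.2]

end DeltaCatAux

namespace DeltaCatAux

open DeltaCat List

lemma head?_dropWhile_ne_zero : ∀ t : List ℕ,
    t.dropWhile (· ≠ 0) = [] ∨ (t.dropWhile (· ≠ 0)).head? = some 0 := by
  intro t
  induction t with
  | nil => left; rfl
  | cons x t ih =>
      by_cases hx : x = 0
      · subst hx; right; simp [List.dropWhile_cons]
      · simpa [List.dropWhile_cons, hx] using ih

/-- the splitting map of the first-return decomposition -/
def split (l : List ℕ) : (_ : ℕ) × (List ℕ × List ℕ) :=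
  ⟨(l.tail.takeWhile (· ≠ 0)).length,
    ((l.tail.takeWhile (· ≠ 0)).map (· - 1), l.tail.dropWhile (· ≠ 0))⟩

lemma split_spec {m : ℕ} {l : List ℕ} (hl : l ∈ dyckPaths (m + 1)) :
    (split l).1 ∈ Finset.range (m + 1) ∧
    (split l).2.1 ∈ dyck' (split l).1 ∧
    (split l).2.2 ∈ dyck' (m - (split l).1) ∧
    glue (split l).2.1 (split l).2.2 = l := by
  obtain ⟨hd, hlen⟩ := mem_dyckPaths_iff.mp hl
  obtain ⟨x, t, rfl⟩ := List.exists_cons_of_ne_nil hd.1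
  have hx : x = 0 := by simpa [ent] using hd.2.1
  subst hx
  have ht : t.length = m := by simpa using hlen
  have hch : (0 :: t).Chain' Step := ((isDyck_iff _).mp hd).2.2
  simp only [split, List.tail_cons]
  obtain ⟨a, ha⟩ : ∃ a, t.takeWhile (· ≠ 0) = a := ⟨_, rfl⟩
  obtain ⟨v, hv⟩ : ∃ v, t.dropWhile (· ≠ 0) = v := ⟨_, rfl⟩
  rw [ha, hv]
  have htav : a ++ v = t := by rw [← ha, ← hv]; exact t.takeWhile_append_dropWhile
  have hamem : ∀ x ∈ a, x ≠ 0 := by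
    intro x hx
    rw [← ha] at hx
    simpa using List.mem_takeWhile_imp hx
  have hvh : v = [] ∨ v.head? = some 0 := by
    rw [← hv]; exact head?_dropWhile_ne_zero t
  have hcht : t.Chain' Step := hch.tail
  have hchav : (a ++ v).Chain' Step := by rwa [htav]
  have hcha : a.Chain' Step := (List.isChain_append.mp hchav).1
  have hchv : v.Chain' Step := (List.isChain_append.mp hchav).2.1
  have hlen' : a.length + v.length = m := by
    have := congrArg List.length htav
    simp at this
    omega
  -- membership of the first part
  have hu : (a.map (· - 1)) ∈ dyck' a.length := by
    rw [mem_dyck'_iff]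
    refine ⟨by simp, ?_⟩
    rcases a with _ | ⟨y, a'⟩
    · left; rfl
    · right
      have hy1 : y ≤ 1 := by
        have hh : t.head? = some y := by rw [← htav]; rfl
        have := (List.isChain_cons.mp hch).1 y (by rw [hh]; rfl)
        simpa [Step] using this
      have hy0 : y ≠ 0 := hamem y (by simp)
      have hy : y = 1 := by omega
      rw [isDyck_iff]
      refine ⟨by simp, by simp [ent, hy], ?_⟩
      unfold List.Chain'
      rw [List.isChain_map]
      exact (show List.IsChain Step _ from hcha).imp fun p q hpq => by simp only [Step] at *; omega
  -- membership of the second part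
  have hvm : v ∈ dyck' (m - a.length) := by
    rw [mem_dyck'_iff]
    refine ⟨by omega, ?_⟩
    rcases hvh with h0 | h0
    · left; exact h0
    · right
      rcases v with _ | ⟨y, v'⟩
      · simp at h0
      · simp at h0
        subst h0
        exact (isDyck_iff _).mpr ⟨by simp, by simp [ent], hchv⟩
  refine ⟨by rw [Finset.mem_range]; omega, hu, hvm, ?_⟩
  show glue (a.map (· - 1)) v = 0 :: t
  rw [glue, ← htav]
  congr 1
  rw [List.map_map]
  congr 1
  conv_rhs => rw [← List.map_id a]
  apply List.map_congr_left
  intro x hx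
  have := hamem x hx
  simp
  omega

lemma glue_mem {m k : ℕ} (hk : k ∈ Finset.range (m + 1)) {u v : List ℕ}
    (hu : u ∈ dyck' k) (hv : v ∈ dyck' (m - k)) :
    glue u v ∈ dyckPaths (m + 1) := by
  rw [mem_dyckPaths_iff]
  refine ⟨isDyck_glue hu hv, ?_⟩
  have h1 := (mem_dyck'_iff.mp hu).1
  have h2 := (mem_dyck'_iff.mp hv).1
  have := Finset.mem_range.mp hk
  simp [glue, h1, h2]
  omega

lemma split_glue {k : ℕ} {u v : List ℕ} (hu : u ∈ dyck' k)
    (hvh : v = [] ∨ v.head? = some 0) :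
    split (glue u v) = ⟨u.length, (u, v)⟩ := by
  have hmm : ∀ x ∈ u.map (· + 1), (fun x => decide (x ≠ 0)) x = true := by
    intro x hx
    simp only [List.mem_map] at hx
    obtain ⟨y, -, rfl⟩ := hx
    simp
  have hvh' : ∀ y ∈ v.head?, (fun x => decide (x ≠ 0)) y = false := by
    intro y hy
    rcases hvh with rfl | h0
    · simp at hy
    · rw [h0] at hy
      simp at hy
      simp [← hy]
  obtain ⟨h1, h2⟩ := takeWhile_dropWhile_append hmm hvh' 
  simp only [split, glue, List.tail_cons, h1, h2, List.length_map, List.map_map]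
  congr 1
  congr 1
  conv_rhs => rw [← List.map_id u]
  apply List.map_congr_left
  intro x _
  simp

lemma card_dyckPaths_succ (m : ℕ) :
    (dyckPaths (m + 1)).card
      = ∑ i ∈ Finset.range (m + 1), (dyck' i).card * (dyck' (m - i)).card := by
  rw [show ∑ i ∈ Finset.range (m + 1), (dyck' i).card * (dyck' (m - i)).card
      = ((Finset.range (m + 1)).sigma fun i => dyck' i ×ˢ dyck' (m - i)).card from by
    rw [Finset.card_sigma]
    exact Finset.sum_congr rfl fun i _ => (Finset.card_product _ _).symm]
  apply Finset.card_bij' (fun l _ => split l) (fun x _ => glue x.2.1 x.2.2)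
  · intro l hl
    have h := split_spec hl
    rw [Finset.mem_sigma, Finset.mem_product]
    exact ⟨h.1, h.2.1, h.2.2.1⟩
  · rintro ⟨k, u, v⟩ hx
    rw [Finset.mem_sigma, Finset.mem_product] at hx
    exact glue_mem hx.1 hx.2.1 hx.2.2
  · intro l hl
    exact (split_spec hl).2.2.2
  · rintro ⟨k, u, v⟩ hx
    rw [Finset.mem_sigma, Finset.mem_product] at hx
    have hlen : u.length = k := (mem_dyck'_iff.mp hx.2.1).1
    subst hlen
    exact split_glue hx.2.1 (head?_of_dyck' hx.2.2)

lemma card_dyck' : ∀ m : ℕ, (dyck' m).card = catalan m := by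
  intro m
  induction m using Nat.strong_induction_on with
  | _ m ih =>
    match m with
    | 0 => simp [dyck']
    | Nat.succ m =>
        have : dyck' (m + 1) = dyckPaths (m + 1) := by simp [dyck']
        rw [this, card_dyckPaths_succ, catalan_succ,
          Fin.sum_univ_eq_sum_range (fun i => catalan i * catalan (m - i))]
        apply Finset.sum_congr rfl
        intro i hi
        rw [ih i (by simp at hi; omega), ih (m - i) (by simp at hi; omega)]

lemma card_dyckPaths {n : ℕ} (hn : 1 ≤ n) : (dyckPaths n).card = catalan n := by
  have : dyck' n = dyckPaths n := by
    unfold dyck'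
    rw [if_neg (by omega)]
  rw [← this, card_dyck']

end DeltaCatAux

namespace DeltaCatAux

open DeltaCat List

lemma lastMaxRow_lt {l : List ℕ} {n : ℕ} (hn : 1 ≤ n) (hl : l.length = n) :
    lastMaxRow l < n := by
  have : lastMaxRow l ≤ n - 1 := by
    apply Finset.sup_le
    intro b hb
    have := Finset.mem_range.mp (Finset.mem_filter.mp hb).1
    simp only [id]
    omega
  omega

lemma card_validDec {l : List ℕ} {n : ℕ} (hn : 1 ≤ n) (hl : l.length = n) :
    ((Finset.range n).powerset.filter (fun S => ValidDec l S)).card = 2 ^ (n - 1) := by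
  have hm : lastMaxRow l ∈ Finset.range n := Finset.mem_range.mpr (lastMaxRow_lt hn hl)
  have : (Finset.range n).powerset.filter (fun S => ValidDec l S)
      = ((Finset.range n).erase (lastMaxRow l)).powerset := by
    ext S
    simp only [Finset.mem_filter, Finset.mem_powerset, Finset.subset_erase]
    constructor
    · rintro ⟨hsub, -, h2⟩
      exact ⟨hsub, h2⟩
    · rintro ⟨hsub, h2⟩
      refine ⟨hsub, fun i hi => ?_, h2⟩
      have := hsub hi
      rw [Finset.mem_range] at this
      omega
  rw [this, Finset.card_powerset, Finset.card_erase_of_mem hm, Finset.card_range]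

lemma card_decPaths_eq (n : ℕ) (hn : 1 ≤ n) :
    (decPaths n).card = (dyckPaths n).card * 2 ^ (n - 1) := by
  rw [decPaths, Finset.card_filter, Finset.sum_product]
  have key : ∀ l ∈ allSeqs n,
      (∑ S ∈ (Finset.range n).powerset,
        if IsDyck l ∧ ValidDec l S then 1 else 0)
        = if IsDyck l then 2 ^ (n - 1) else 0 := by
    intro l hl
    by_cases hd : IsDyck l
    · rw [if_pos hd]
      have hlen : l.length = n := (mem_allSeqs_iff.mp hl).1
      rw [← card_validDec hn hlen, Finset.card_filter]
      apply Finset.sum_congr rfl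
      intro S _
      simp [hd]
    · simp [hd]
  rw [Finset.sum_congr rfl key, Finset.sum_ite, Finset.sum_const, Finset.sum_const]
  simp [dyckPaths, mul_comm]

end DeltaCatAux




open DeltaCatAux in
/-- The number of ∘-decorated Dyck paths of size `n` is `2^(n-1)/(n+1) * binom(2n, n)`:
equivalently, `n + 1` times this number equals `2^(n-1) * binom(2n, n)`. -/
theorem card_decPaths (n : ℕ) (hn : 1 ≤ n) :
    (n + 1) * (decPaths n).card = 2 ^ (n - 1) * Nat.choose (2 * n) n := by
  rw [card_decPaths_eq n hn, card_dyckPaths hn, ← mul_assoc,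
    succ_mul_catalan_eq_centralBinom, Nat.centralBinom, mul_comm]
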